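/- arXiv:1110.4154 — 4 statements merged into one kernel-verified Lean document; each statement's English description precedes it below -/
import Mathlib

section
/- If U and V are ultrafilters on ω with V ≤_T U (there exists a cofinal map from (U, ⊇) to (V, ⊇)), then there exists a monotone cofinal map f : U → V, i.e., a map such that X ⊇ Y implies f(X) ⊇ f(Y), whose image of every cofinal subset of U is cofinal in V. -/
/-- `D` is a cofinal subset of the ultrafilter `U` ordered by reverse inclusion. -/
def IsCofinalIn (U : Ultrafilter ℕ) (D : Set (Set ℕ)) : Prop :=
  (∀ X ∈ D, X ∈ U) ∧ ∀ A ∈ U, ∃ X ∈ D, X ⊆ A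

/-- `f` is a cofinal map from `(U, ⊇)` to `(V, ⊇)`. -/
def CofMapUF (U V : Ultrafilter ℕ) (f : Set ℕ → Set ℕ) : Prop :=
  (∀ A ∈ U, f A ∈ V) ∧ ∀ D, IsCofinalIn U D → ∀ B ∈ V, ∃ X ∈ D, f X ⊆ B

/-- `f` is monotone with respect to reverse inclusion on members of `U`. -/
def MonotoneUF (U : Ultrafilter ℕ) (f : Set ℕ → Set ℕ) : Prop :=
  ∀ A B, A ∈ U → B ∈ U → B ⊆ A → f B ⊆ f A

theorem stmt2 (U V : Ultrafilter ℕ) (h : ∃ f : Set ℕ → Set ℕ, CofMapUF U V f) :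
    ∃ f : Set ℕ → Set ℕ, CofMapUF U V f ∧ MonotoneUF U f := by
  obtain ⟨f, hf1, hf2⟩ := h
  refine ⟨fun X => ⋃ Y ∈ {Y : Set ℕ | Y ∈ U ∧ Y ⊆ X}, f Y, ⟨?_, ?_⟩, ?_⟩
  · intro A hA
    have : f A ⊆ ⋃ Y ∈ {Y : Set ℕ | Y ∈ U ∧ Y ⊆ A}, f Y := by
      intro x hx
      exact Set.mem_biUnion ⟨hA, subset_rfl⟩ hx
    exact V.toFilter.mem_of_superset (hf1 A hA) this
  · intro D hD B hB
    by_cases hc : IsCofinalIn U {Y : Set ℕ | Y ∈ U ∧ ¬ f Y ⊆ B}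
    · obtain ⟨X, hX, hXB⟩ := hf2 _ hc B hB
      exact absurd hXB hX.2
    · simp only [IsCofinalIn, not_and_or] at hc
      rcases hc with hc | hc
      · exact absurd (fun X hX => hX.1) hc
      · push_neg at hc
        obtain ⟨A, hA, hAall⟩ := hc
        obtain ⟨X, hXD, hXA⟩ := hD.2 A hA
        refine ⟨X, hXD, ?_⟩
        intro x hx
        simp only [Set.mem_iUnion] at hx
        obtain ⟨Y, ⟨hYU, hYX⟩, hxY⟩ := hx
        have hfYB : f Y ⊆ B := by
          by_contra hnot
          exact hAall Y ⟨hYU, hnot⟩ (hYX.trans hXA)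
        exact hfYB hxY
  · intro A C _ _ hCA x hx
    simp only [Set.mem_iUnion] at hx ⊢
    obtain ⟨Y, ⟨hYU, hYC⟩, hxY⟩ := hx
    exact ⟨Y, ⟨hYU, hYC.trans hCA⟩, hxY⟩
end

section
/- Extension of monotone cofinal maps along a cofinal subset: let U and V be ultrafilters on ω, f : U → V a monotone cofinal map, and D ⊆ U cofinal. Define f'(A) = ⋃{f(X) : X ∈ D, X ⊆ A} for A ∈ U. Then f' : U → V is a monotone cofinal map and f' agrees with f on D. -/
/-- Monotone cofinal map from `(U, ⊇)` to `(V, ⊇)`. -/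
def MonCofMap (U V : Ultrafilter ℕ) (f : Set ℕ → Set ℕ) : Prop :=
  (∀ A ∈ U, f A ∈ V) ∧
  (∀ A B : Set ℕ, A ∈ U → B ∈ U → A ⊆ B → f A ⊆ f B) ∧
  ∀ D, IsCofinalIn U D → ∀ B ∈ V, ∃ X ∈ D, f X ⊆ B

theorem stmt9 (U V : Ultrafilter ℕ) (f : Set ℕ → Set ℕ) (hf : MonCofMap U V f)
    (D : Set (Set ℕ)) (hD : IsCofinalIn U D) :
    MonCofMap U V (fun A => ⋃₀ {S | ∃ X ∈ D, X ⊆ A ∧ S = f X}) ∧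
    ∀ X ∈ D, (⋃₀ {S | ∃ Y ∈ D, Y ⊆ X ∧ S = f Y}) = f X := by
  obtain ⟨hmem, hmono, hcof⟩ := hf
  obtain ⟨hDU, hDcof⟩ := hD
  -- f' X ⊆ f X for X ∈ U
  have hsub : ∀ X ∈ U, (⋃₀ {S | ∃ Y ∈ D, Y ⊆ X ∧ S = f Y}) ⊆ f X := by
    intro X hX a ha
    obtain ⟨S, ⟨Y, hYD, hYX, rfl⟩, haS⟩ := ha
    exact hmono Y X (hDU Y hYD) hX hYX haS
  -- f X ⊆ f' A whenever X ∈ D, X ⊆ A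
  have hsup : ∀ X ∈ D, ∀ A, X ⊆ A → f X ⊆ ⋃₀ {S | ∃ Y ∈ D, Y ⊆ A ∧ S = f Y} := by
    intro X hX A hXA a ha
    exact ⟨f X, ⟨X, hX, hXA, rfl⟩, ha⟩
  refine ⟨⟨?_, ?_, ?_⟩, ?_⟩
  · intro A hA
    obtain ⟨X, hXD, hXA⟩ := hDcof A hA
    exact Filter.mem_of_superset (hmem X (hDU X hXD)) (hsup X hXD A hXA)
  · intro A B _ _ hAB a ha
    obtain ⟨S, ⟨Y, hYD, hYA, rfl⟩, haS⟩ := ha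
    exact ⟨f Y, ⟨Y, hYD, hYA.trans hAB, rfl⟩, haS⟩
  · intro D' hD' B hB
    obtain ⟨X, hXD', hXB⟩ := hcof D' hD' B hB
    exact ⟨X, hXD', (hsub X (hD'.1 X hXD')).trans hXB⟩
  · intro X hX
    exact Set.Subset.antisymm (hsub X (hDU X hX)) (hsup X hX X subset_rfl)
end

section
/- Compactness argument for stabilization: let D̄ ⊆ P(ω) be closed (hence compact in the Cantor topology), let f̃, g̃ : P(ω) → P(ω) be continuous, let Ȳ = f̃''D̄, and let Y ∈ Ȳ. Then for each m̃ < ω there exists m ≥ m̃ such that for every Z ∈ D̄ with f̃(Z) ∩ m = Y ∩ m, there exists X ∈ D̄ with f̃(X) = Y and g̃(X) ∩ m̃ = g̃(Z) ∩ m̃. -/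
open Set

/-- Continuity on `D ⊆ P(ω)` with respect to the Cantor topology. -/
def CtsOn (D : Set (Set ℕ)) (f : Set ℕ → Set ℕ) : Prop :=
  ∀ X ∈ D, ∀ m : ℕ, ∃ n : ℕ, ∀ Y ∈ D, Y ∩ Iio n = X ∩ Iio n →
    f Y ∩ Iio m = f X ∩ Iio m

/-- `D` is closed in `P(ω)` with the Cantor topology. -/
def IsClosedSets (D : Set (Set ℕ)) : Prop :=
  ∀ X : Set ℕ, (∀ n : ℕ, ∃ Y ∈ D, Y ∩ Iio n = X ∩ Iio n) → X ∈ D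

lemma inter_Iio_mono {A B : Set ℕ} {n m : ℕ} (h : n ≤ m)
    (hAB : A ∩ Iio m = B ∩ Iio m) : A ∩ Iio n = B ∩ Iio n := by
  ext k
  constructor <;> intro hk
  · have : k ∈ B ∩ Iio m := hAB ▸ ⟨hk.1, lt_of_lt_of_le hk.2 h⟩
    exact ⟨this.1, hk.2⟩
  · have : k ∈ A ∩ Iio m := hAB.symm ▸ ⟨hk.1, lt_of_lt_of_le hk.2 h⟩
    exact ⟨this.1, hk.2⟩

lemma eq_of_inter_Iio {A B : Set ℕ} (h : ∀ n, A ∩ Iio n = B ∩ Iio n) : A = B := by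
  ext k
  constructor <;> intro hk
  · have : k ∈ B ∩ Iio (k + 1) := by
      rw [← h (k + 1)]; exact ⟨hk, Nat.lt_succ_self k⟩
    exact this.1
  · have : k ∈ A ∩ Iio (k + 1) := by
      rw [h (k + 1)]; exact ⟨hk, Nat.lt_succ_self k⟩
    exact this.1

lemma limit_lemma (Dbar : Set (Set ℕ)) (ft gt : Set ℕ → Set ℕ)
    (hD : IsClosedSets Dbar) (hf : CtsOn univ ft) (hg : CtsOn univ gt)
    (Y s : Set ℕ) (mt : ℕ)
    (h : ∀ n : ℕ, ∃ Z ∈ Dbar, ft Z ∩ Iio n = Y ∩ Iio n ∧ gt Z ∩ Iio mt = s) :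
    ∃ X ∈ Dbar, ft X = Y ∧ gt X ∩ Iio mt = s := by
  choose Z hZD hZf hZg using h
  set U : Ultrafilter ℕ := Ultrafilter.of Filter.atTop with hU
  set X : Set ℕ := {k | ∀ᶠ j in (U : Filter ℕ), k ∈ Z j} with hX
  have hmemk : ∀ k : ℕ, ∀ᶠ j in (U : Filter ℕ), (k ∈ Z j ↔ k ∈ X) := by
    intro k
    by_cases hk : k ∈ X
    · filter_upwards [hk] with j hj
      exact ⟨fun _ => hk, fun _ => hj⟩
    · have hk' : ∀ᶠ j in (U : Filter ℕ), ¬ k ∈ Z j :=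
        Ultrafilter.eventually_not.2 hk
      filter_upwards [hk'] with j hj
      exact ⟨fun h' => absurd h' hj, fun h' => absurd h' hk⟩
  have hagree : ∀ n : ℕ, ∀ᶠ j in (U : Filter ℕ), Z j ∩ Iio n = X ∩ Iio n := by
    intro n
    have : ∀ᶠ j in (U : Filter ℕ), ∀ k < n, (k ∈ Z j ↔ k ∈ X) := by
      induction n with
      | zero => filter_upwards with j k hk; omega
      | succ n ih =>
        filter_upwards [ih, hmemk n] with j hj hjn k hk
        rcases Nat.lt_succ_iff_lt_or_eq.1 hk with h' | h'
        · exact hj k h'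
        · subst h'; exact hjn
    filter_upwards [this] with j hj
    ext k
    constructor <;> intro hk
    · exact ⟨(hj k hk.2).1 hk.1, hk.2⟩
    · exact ⟨(hj k hk.2).2 hk.1, hk.2⟩
  have hatTop : ∀ m : ℕ, ∀ᶠ j in (U : Filter ℕ), m ≤ j := by
    intro m
    exact (Filter.eventually_ge_atTop m).filter_mono (Ultrafilter.of_le Filter.atTop)
  have hXD : X ∈ Dbar := by
    apply hD
    intro n
    obtain ⟨j, hj⟩ := (hagree n).exists
    exact ⟨Z j, hZD j, hj⟩
  refine ⟨X, hXD, ?_, ?_⟩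
  · apply eq_of_inter_Iio
    intro m'
    obtain ⟨n, hn⟩ := hf X (mem_univ X) m'
    obtain ⟨j, hj1, hj2⟩ := ((hagree n).and (hatTop m')).exists
    have h1 : ft (Z j) ∩ Iio m' = ft X ∩ Iio m' := hn (Z j) (mem_univ _) hj1
    have h2 : ft (Z j) ∩ Iio m' = Y ∩ Iio m' := inter_Iio_mono hj2 (hZf j)
    rw [← h1, h2]
  · obtain ⟨n, hn⟩ := hg X (mem_univ X) mt
    obtain ⟨j, hj⟩ := (hagree n).exists
    have h1 : gt (Z j) ∩ Iio mt = gt X ∩ Iio mt := hn (Z j) (mem_univ _) hj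
    rw [← h1, hZg j]

theorem stmt11 (Dbar : Set (Set ℕ)) (ft gt : Set ℕ → Set ℕ)
    (hD : IsClosedSets Dbar) (hf : CtsOn univ ft) (hg : CtsOn univ gt)
    (Y : Set ℕ) (hY : Y ∈ ft '' Dbar) (mt : ℕ) :
    ∃ m ≥ mt, ∀ Z ∈ Dbar, ft Z ∩ Iio m = Y ∩ Iio m →
      ∃ X ∈ Dbar, ft X = Y ∧ gt X ∩ Iio mt = gt Z ∩ Iio mt := by
  classical
  -- a subset `s` (given as a finset) is bad if no witness exists for it
  let bad : Finset ℕ → Prop := fun t =>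
    ¬ ∃ X ∈ Dbar, ft X = Y ∧ gt X ∩ Iio mt = (↑t : Set ℕ)
  have hbad : ∀ t : Finset ℕ, bad t →
      ∃ n : ℕ, ∀ Z ∈ Dbar, ft Z ∩ Iio n = Y ∩ Iio n → gt Z ∩ Iio mt ≠ (↑t : Set ℕ) := by
    intro t ht
    by_contra hcon
    push_neg at hcon
    exact ht (limit_lemma Dbar ft gt hD hf hg Y (↑t) mt (by
      intro n
      obtain ⟨Z, hZ1, hZ2, hZ3⟩ := hcon n
      exact ⟨Z, hZ1, hZ2, hZ3⟩))
  let N : Finset ℕ → ℕ := fun t => if h : bad t then (hbad t h).choose else 0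
  refine ⟨mt + ((Finset.range mt).powerset).sup N, Nat.le_add_right _ _, ?_⟩
  intro Z hZ hZY
  set t : Finset ℕ := (Finset.range mt).filter (· ∈ gt Z) with hts
  have htZ : (↑t : Set ℕ) = gt Z ∩ Iio mt := by
    ext k
    simp [hts, Finset.mem_filter, Finset.mem_range, Set.mem_Iio, and_comm]
  by_cases hb : bad t
  · exfalso
    have hNt : N t = (hbad t hb).choose := dif_pos hb
    have hle : N t ≤ mt + ((Finset.range mt).powerset).sup N := by
      have : t ∈ (Finset.range mt).powerset := Finset.mem_powerset.2 (Finset.filter_subset _ _)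
      exact le_trans (Finset.le_sup this) (Nat.le_add_left _ _)
    have := (hbad t hb).choose_spec Z hZ (inter_Iio_mono (hNt ▸ hle) hZY)
    exact this htZ.symm
  · obtain ⟨X, hX1, hX2, hX3⟩ := not_not.1 hb
    exact ⟨X, hX1, hX2, by rw [hX3, htZ]⟩
end

section
/- Every ultrafilter supporting continuous cofinal maps has Tukey type of cardinality continuum: if U is an ultrafilter on ω such that for every V ≤_T U there is a continuous monotone cofinal map f : U → V, then the set of ultrafilters Tukey-equivalent to U has cardinality at most 𝔠 (the cardinality of the continuum). -/
open Set

/-- `V ≤_T U`. -/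
def TukeyLEU (V U : Ultrafilter ℕ) : Prop := ∃ f : Set ℕ → Set ℕ, CofMapUF U V f

theorem stmt15 (U : Ultrafilter ℕ)
    (hU : ∀ V : Ultrafilter ℕ, TukeyLEU V U →
      ∃ f : Set ℕ → Set ℕ, CofMapUF U V f ∧
        (∀ A B : Set ℕ, A ∈ U → B ∈ U → A ⊆ B → f A ⊆ f B) ∧
        CtsOn {A : Set ℕ | A ∈ U} f) :
    Cardinal.mk {W : Ultrafilter ℕ | TukeyLEU W U ∧ TukeyLEU U W} ≤ Cardinal.continuum := by
  classical
  set S := {W : Ultrafilter ℕ | TukeyLEU W U ∧ TukeyLEU U W} with hS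
  have key : ∀ W : S, ∃ f : Set ℕ → Set ℕ, CofMapUF U W f ∧
      (∀ A B : Set ℕ, A ∈ U → B ∈ U → A ⊆ B → f A ⊆ f B) ∧
      CtsOn {A : Set ℕ | A ∈ U} f := fun W => hU W W.2.1
  choose f hf hmono hcts using key
  let E : S → Set (ℕ × ℕ × Finset ℕ) := fun W =>
    {p | ∃ X ∈ U, X ∩ Iio p.2.1 = ↑p.2.2 ∧
      (∀ Y ∈ U, Y ∩ Iio p.2.1 = X ∩ Iio p.2.1 →
        f W Y ∩ Iio (p.1 + 1) = f W X ∩ Iio (p.1 + 1)) ∧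
      p.1 ∈ f W X}
  -- membership in `f W X` is determined by `E W`
  have hmem : ∀ (W : S) (X : Set ℕ), X ∈ U → ∀ m : ℕ,
      (m ∈ f W X ↔ ∃ n : ℕ, ∃ t : Finset ℕ, (m, n, t) ∈ E W ∧ X ∩ Iio n = ↑t) := by
    intro W X hX m
    constructor
    · intro hm
      obtain ⟨n, hn⟩ := hcts W X hX (m + 1)
      have hfin : (X ∩ Iio n).Finite := (finite_Iio n).inter_of_right X
      refine ⟨n, hfin.toFinset, ⟨X, hX, ?_, ?_, hm⟩, hfin.coe_toFinset.symm⟩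
      · exact hfin.coe_toFinset.symm
      · intro Y hY hYX; exact hn Y hY hYX
    · rintro ⟨n, t, ⟨X', hX', hX't, hstab, hm⟩, hXt⟩
      have : f W X ∩ Iio (m + 1) = f W X' ∩ Iio (m + 1) :=
        hstab X hX (by rw [hXt, hX't])
      have hm' : m ∈ f W X' ∩ Iio (m + 1) := ⟨hm, Nat.lt_succ_self m⟩
      rw [← this] at hm'
      exact hm'.1
  have hinj : Function.Injective E := by
    intro W₁ W₂ hE
    have hfeq : ∀ X ∈ U, f W₁ X = f W₂ X := by
      intro X hX
      ext m
      rw [hmem W₁ X hX m, hmem W₂ X hX m, hE]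
    have hDcof : IsCofinalIn U {A : Set ℕ | A ∈ U} :=
      ⟨fun X hX => hX, fun A hA => ⟨A, hA, subset_rfl⟩⟩
    have hsub : ∀ (W W' : S), (∀ X ∈ U, f W X = f W' X) →
        ∀ B ∈ (W : Ultrafilter ℕ), B ∈ (W' : Ultrafilter ℕ) := by
      intro W W' hff B hB
      obtain ⟨X, hX, hXB⟩ := (hf W).2 {A : Set ℕ | A ∈ U} hDcof B hB
      have : f W' X ∈ (W' : Ultrafilter ℕ) := (hf W').1 X hX
      exact Filter.mem_of_superset this (by rw [← hff X hX]; exact hXB)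
    have : (W₁ : Ultrafilter ℕ) = (W₂ : Ultrafilter ℕ) := by
      ext B
      exact ⟨hsub W₁ W₂ hfeq B, hsub W₂ W₁ (fun X hX => (hfeq X hX).symm) B⟩
    exact Subtype.ext this
  calc Cardinal.mk S ≤ Cardinal.mk (Set (ℕ × ℕ × Finset ℕ)) :=
        Cardinal.mk_le_of_injective hinj
    _ = 2 ^ Cardinal.mk (ℕ × ℕ × Finset ℕ) := Cardinal.mk_set
    _ = 2 ^ Cardinal.aleph0 := by rw [Cardinal.mk_eq_aleph0]
    _ = Cardinal.continuum := Cardinal.two_power_aleph0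
end
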